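/- Let N ≥ 1, γ₁, …, γ_N > 0, η > 0, σ > 0, and q ∈ ℝᴺ. Define f : ℝᴺ → ℝ by f(z) = Σᵢ (η/2)σ²γᵢ(zᵢ + qᵢ)² + (η²σ²/2)(Σᵢ zᵢ)². Then f has a unique global minimizer z* given by zᵢ* = −qᵢ + (η/γᵢ)·(Σⱼ qⱼ)/(1 + ηΓ), where Γ := Σⱼ 1/γⱼ. Equivalently, z* is the unique solution of the linear system γᵢ(zᵢ + qᵢ) + η Σⱼ zⱼ = 0 for all i. -/

import Mathlib

theorem risk_sharing_minimizer (N : ℕ) (hN : 1 ≤ N) (γ : Fin N → ℝ)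
    (hγ : ∀ i, 0 < γ i) (η σ : ℝ) (hη : 0 < η) (hσ : 0 < σ) (q : Fin N → ℝ)
    (f : (Fin N → ℝ) → ℝ)
    (hf : ∀ z, f z = ∑ i, (η / 2) * σ ^ 2 * γ i * (z i + q i) ^ 2
        + (η ^ 2 * σ ^ 2 / 2) * (∑ i, z i) ^ 2)
    (Γ : ℝ) (hΓ : Γ = ∑ j, 1 / γ j)
    (zstar : Fin N → ℝ)
    (hz : ∀ i, zstar i = -q i + (η / γ i) * (∑ j, q j) / (1 + η * Γ)) :
    (∀ z, f zstar ≤ f z) ∧ (∀ z, (∀ y, f z ≤ f y) → z = zstar) ∧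
      (∀ i, γ i * (zstar i + q i) + η * ∑ j, zstar j = 0) ∧
      (∀ z : Fin N → ℝ, (∀ i, γ i * (z i + q i) + η * ∑ j, z j = 0) → z = zstar) := by
  have hΓnn : 0 ≤ Γ := by
    rw [hΓ]
    exact Finset.sum_nonneg fun j _ => by have := hγ j; positivity
  have hpos : (0:ℝ) < 1 + η * Γ := by nlinarith
  have hne : (1 + η * Γ) ≠ 0 := ne_of_gt hpos
  set S := ∑ j, q j with hS
  -- sum of zstar
  have hsum : ∑ j, zstar j = -(S / (1 + η * Γ)) := by
    have h1 : ∀ j : Fin N, zstar j = -q j + (η * S / (1 + η * Γ)) * (1 / γ j) := by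
      intro j; rw [hz j]; ring
    calc ∑ j, zstar j = ∑ j, (-q j + (η * S / (1 + η * Γ)) * (1 / γ j)) :=
          Finset.sum_congr rfl fun j _ => h1 j
      _ = (∑ j, -q j) + ∑ j, (η * S / (1 + η * Γ)) * (1 / γ j) :=
          Finset.sum_add_distrib
      _ = -S + (η * S / (1 + η * Γ)) * Γ := by
          rw [← Finset.mul_sum, ← hΓ, Finset.sum_neg_distrib]
      _ = -(S / (1 + η * Γ)) := by field_simp; ring
  -- first order conditions
  have hfoc : ∀ i, γ i * (zstar i + q i) + η * ∑ j, zstar j = 0 := by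
    intro i
    rw [hz i, hsum]
    have hγi : γ i ≠ 0 := ne_of_gt (hγ i)
    field_simp
    ring
  -- expansion of f around zstar
  have hexp : ∀ z, f z = f zstar
      + ∑ i, (η / 2) * σ ^ 2 * γ i * (z i - zstar i) ^ 2
      + (η ^ 2 * σ ^ 2 / 2) * (∑ i, (z i - zstar i)) ^ 2 := by
    intro z
    rw [hf z, hf zstar]
    have hA : ∑ i, z i = (∑ i, zstar i) + ∑ i, (z i - zstar i) := by
      rw [← Finset.sum_add_distrib]
      exact Finset.sum_congr rfl fun i _ => by ring
    rw [hA]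
    have e1 : ∑ i, (η / 2) * σ ^ 2 * γ i * (z i + q i) ^ 2
        = (∑ i, (η / 2) * σ ^ 2 * γ i * (zstar i + q i) ^ 2)
          + (∑ i, (η * σ ^ 2 * (γ i * (zstar i + q i))) * (z i - zstar i))
          + ∑ i, (η / 2) * σ ^ 2 * γ i * (z i - zstar i) ^ 2 := by
      rw [← Finset.sum_add_distrib, ← Finset.sum_add_distrib]
      exact Finset.sum_congr rfl fun i _ => by ring
    rw [e1]
    have e2 : ∑ i, (η * σ ^ 2 * (γ i * (zstar i + q i))) * (z i - zstar i)
        = ∑ i, (η * σ ^ 2 * (-(η * ∑ j, zstar j))) * (z i - zstar i) := by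
      refine Finset.sum_congr rfl fun i _ => ?_
      have := hfoc i
      have : γ i * (zstar i + q i) = -(η * ∑ j, zstar j) := by linarith
      rw [this]
    rw [e2, ← Finset.mul_sum]
    ring
  have hnonneg : ∀ z : Fin N → ℝ, 0 ≤ ∑ i, (η / 2) * σ ^ 2 * γ i * (z i - zstar i) ^ 2 := by
    intro z
    exact Finset.sum_nonneg fun i _ => by have := hγ i; positivity
  have hmin : ∀ z, f zstar ≤ f z := by
    intro z
    rw [hexp z]
    have h1 := hnonneg z
    have h2 : 0 ≤ (η ^ 2 * σ ^ 2 / 2) * (∑ i, (z i - zstar i)) ^ 2 := by positivity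
    linarith
  refine ⟨hmin, ?_, hfoc, ?_⟩
  · -- uniqueness of minimizer
    intro z hzmin
    have heq : f z = f zstar := le_antisymm (hzmin zstar) (hmin z)
    have h0 : ∑ i, (η / 2) * σ ^ 2 * γ i * (z i - zstar i) ^ 2 = 0 := by
      have := hexp z
      have h2 : 0 ≤ (η ^ 2 * σ ^ 2 / 2) * (∑ i, (z i - zstar i)) ^ 2 := by positivity
      have h1 := hnonneg z
      linarith [heq ▸ this]
    funext i
    have hterm : (η / 2) * σ ^ 2 * γ i * (z i - zstar i) ^ 2 = 0 :=
      (Finset.sum_eq_zero_iff_of_nonneg fun j _ => by have := hγ j; positivity).mp h0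
        i (Finset.mem_univ i)
    have hci : (0:ℝ) < (η / 2) * σ ^ 2 * γ i := by have := hγ i; positivity
    have : (z i - zstar i) ^ 2 = 0 := by
      rcases mul_eq_zero.mp hterm with h | h
      · exact absurd h (ne_of_gt hci)
      · exact h
    have := pow_eq_zero_iff (n := 2) (by norm_num) |>.mp this
    linarith [this]
  · -- uniqueness of solution of the linear system
    intro z hlin
    have hd : ∀ i, γ i * (z i - zstar i) + η * ((∑ j, z j) - ∑ j, zstar j) = 0 := by
      intro i
      have h1 := hlin i
      have h2 := hfoc i
      linarith [h1, h2]
    set D := (∑ j, z j) - ∑ j, zstar j with hD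
    have hdi : ∀ i, z i - zstar i = -(η * D) / γ i := by
      intro i
      have := hd i
      have hγi : γ i ≠ 0 := ne_of_gt (hγ i)
      field_simp
      linarith [this]
    have hDsum : D = -(η * D) * Γ := by
      have : (∑ j, (z j - zstar j)) = ∑ j, (-(η * D)) * (1 / γ j) :=
        Finset.sum_congr rfl fun j _ => by rw [hdi j]; ring
      rw [← Finset.mul_sum, ← hΓ] at this
      have h2 : D = ∑ j, (z j - zstar j) := by
        rw [hD, Finset.sum_sub_distrib]
      exact h2.trans this
    have hD0 : D = 0 := by
      have : D * (1 + η * Γ) = 0 := by linarith [hDsum]; 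
      rcases mul_eq_zero.mp this with h | h
      · exact h
      · exact absurd h hne
    funext i
    have := hdi i
    rw [hD0] at this
    simp at this
    linarith [this]
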